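/- For every β > 0 the function g_β is concave on the nonnegative rationals: for all rationals α₁, α₂ ≥ 0 and all integers 0 ≤ p ≤ q with q > 0, g_β((p/q)α₁ + (1−p/q)α₂) ≥ (p/q)g_β(α₁) + (1−p/q)g_β(α₂). -/

import Mathlib

open scoped Classical
open Filter

noncomputable section

/-- The three allowed steps: east `(1,0)`, north `(0,1)`, south `(0,-1)`. -/
def stepVec : Fin 3 → ℤ × ℤ := ![(1, 0), (0, 1), (0, -1)]

/-- Position of the partially directed walk after `k` steps,
for a configuration `s` of `L` steps. -/
def pathPos (L : ℕ) (s : Fin L → Fin 3) (k : ℕ) : ℤ × ℤ :=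
  ∑ i : Fin L, if (i : ℕ) < k then stepVec (s i) else 0

/-- `s` encodes a path of `W_L` : it is self-avoiding (all visited sites are
distinct) and its last step is horizontal (step index `0`, i.e. `(1,0)`). -/
def IsPath (L : ℕ) (s : Fin L → Fin 3) : Prop :=
  (∀ j k : ℕ, j ≤ L → k ≤ L → pathPos L s j = pathPos L s k → j = k) ∧
  (∀ hL : 0 < L, s ⟨L - 1, by omega⟩ = 0)

/-- Two lattice sites are adjacent (at euclidean distance 1). -/
def adjacent (p q : ℤ × ℤ) : Prop := |p.1 - q.1| + |p.2 - q.2| = 1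

/-- Number of self-touchings: pairs `(i,j)` with `i < j - 1`, `j ≤ L`,
`‖w_i - w_j‖ = 1`. -/
def numTouch (L : ℕ) (s : Fin L → Fin 3) : ℕ :=
  ((Finset.range (L + 1) ×ˢ Finset.range (L + 1)).filter
    (fun ij => ij.1 + 1 < ij.2 ∧ adjacent (pathPos L s ij.1) (pathPos L s ij.2))).card

/-- The set `W_L` of valid `L`-step configurations. -/
def WL (L : ℕ) : Finset (Fin L → Fin 3) := Finset.univ.filter (IsPath L)

/-- Non-uniform weight of a configuration: each step taken at the origin or
after a horizontal step has weight `1/3`, each step after a vertical step has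
weight `1/2`. -/
def nuWeight (L : ℕ) (s : Fin L → Fin 3) : ℝ :=
  ∏ i : Fin L,
    if (i : ℕ) = 0 then (1 / 3 : ℝ)
    else if s ⟨(i : ℕ) - 1, by have := i.isLt; omega⟩ = 0 then 1 / 3 else 1 / 2

/-- The two models: uniform and non-uniform. -/
inductive Model | u | nu

/-- The law `P^m_L` on `W_L`. -/
def pweight : Model → (L : ℕ) → (Fin L → Fin 3) → ℝ
  | Model.u, L, _ => 1 / ((WL L).card : ℝ)
  | Model.nu, L, s => nuWeight L s

/-- The partition function `Z^m_{L,β} = Σ_{w ∈ W_L} e^{H_{L,β}(w)} P^m_L(w)`,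
with Hamiltonian `H_{L,β}(w) = β · (number of self-touchings)`. -/
def Z (m : Model) (L : ℕ) (β : ℝ) : ℝ :=
  ∑ s ∈ WL L, Real.exp (β * (numTouch L s : ℝ)) * pweight m L s

/-- The normalizing constant `c_β = (1+e^{-β/2})/(1-e^{-β/2})`. -/
def cbeta (β : ℝ) : ℝ := (1 + Real.exp (-β / 2)) / (1 - Real.exp (-β / 2))

/-- The geometric increment law `P_β(v = k) = e^{-(β/2)|k|}/c_β`. -/
def incP (β : ℝ) (k : ℤ) : ℝ := Real.exp (-(β / 2) * |(k : ℝ)|) / cbeta β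

/-- Position `V_j` of the random walk built from increments `v`. -/
def Vpos (n : ℕ) (v : Fin n → ℤ) (j : ℕ) : ℤ :=
  ∑ i : Fin n, if (i : ℕ) < j then v i else 0

/-- The area `A_n = Σ_{j=1}^n |V_j|`. -/
def areaA (n : ℕ) (v : Fin n → ℤ) : ℤ := ∑ j ∈ Finset.Icc 1 n, |Vpos n v j|

/-- Probability under `P_β` of an event `E` depending on the first `n`
increments of the random walk. -/
def wProb (β : ℝ) (n : ℕ) (E : (Fin n → ℤ) → Prop) : ℝ :=
  ∑' v : Fin n → ℤ, if E v then ∏ i : Fin n, incP β (v i) else 0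

/-- `P_β(V_{n,k})`: the walk returns to `0` at time `n` with area `A_n = k`. -/
def PV (β : ℝ) (n k : ℕ) : ℝ :=
  wProb β n fun v => Vpos n v n = 0 ∧ areaA n v = (k : ℤ)

/-- `P_β(V_{n,q})` for rational prescribed area `q`. -/
def PVq (β : ℝ) (n : ℕ) (q : ℚ) : ℝ :=
  wProb β n fun v => Vpos n v n = 0 ∧ (areaA n v : ℚ) = q

/-- `P_β(A_n ≤ α n, V_n = 0)`. -/
def Ple (β : ℝ) (n : ℕ) (α : ℝ) : ℝ :=
  wProb β n fun v => (areaA n v : ℝ) ≤ α * n ∧ Vpos n v n = 0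

/-- `P_β(A_n ≤ α n)`. -/
def PleA (β : ℝ) (n : ℕ) (α : ℝ) : ℝ :=
  wProb β n fun v => (areaA n v : ℝ) ≤ α * n

/-- `P_β(max_{1 ≤ j ≤ n} |V_j| ≤ α)`. -/
def Pmax (β : ℝ) (n : ℕ) (α : ℝ) : ℝ :=
  wProb β n fun v => ∀ j ∈ Finset.Icc 1 n, (|Vpos n v j| : ℝ) ≤ α

/-- `n ∈ N_α`, i.e. `n ≥ 2` and `α n ∈ ℕ`. -/
def Nmem (α : ℚ) (n : ℕ) : Prop := 2 ≤ n ∧ ∃ m : ℕ, α * (n : ℚ) = (m : ℚ)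

/-- `g_β(α) = sup_{N ∈ N_α} (1/N) log P_β(V_{N, αN})` for rational `α ≥ 0`. -/
def gQ (β : ℝ) (α : ℚ) : ℝ :=
  sSup {x : ℝ | ∃ n : ℕ, Nmem α n ∧ x = Real.log (PVq β n (α * n)) / n}

/-- `Γ^u(β) = c_β/e^β`, `Γ^nu(β) = 2c_β/(3e^β)`. -/
def Gam : Model → ℝ → ℝ
  | Model.u, β => cbeta β / Real.exp β
  | Model.nu, β => 2 * cbeta β / (3 * Real.exp β)

/-- `φ^u_β = β - log(1+√2)`, `φ^nu_β = β - log 2`. -/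
def phim : Model → ℝ → ℝ
  | Model.u, β => β - Real.log (1 + Real.sqrt 2)
  | Model.nu, β => β - Real.log 2

end


namespace S8
open ENNReal

lemma cbeta_pos {β : ℝ} (hβ : 0 < β) : 0 < cbeta β := by
  have h1 : Real.exp (-β/2) < 1 := Real.exp_lt_one_iff.2 (by linarith)
  have h2 : 0 < Real.exp (-β/2) := Real.exp_pos _
  exact div_pos (by linarith) (by linarith)

lemma incP_pos {β : ℝ} (hβ : 0 < β) (k : ℤ) : 0 < incP β k :=
  div_pos (Real.exp_pos _) (cbeta_pos hβ)

/-- ENNReal version of `wProb`. -/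
noncomputable def G (β : ℝ) (n : ℕ) (E : (Fin n → ℤ) → Prop) : ℝ≥0∞ :=
  ∑' v : Fin n → ℤ, if E v then ∏ i : Fin n, ENNReal.ofReal (incP β (v i)) else 0

lemma wProb_eq {β : ℝ} (hβ : 0 < β) (n : ℕ) (E : (Fin n → ℤ) → Prop) :
    wProb β n E = (G β n E).toReal := by
  rw [wProb, G, ENNReal.tsum_toReal_eq]
  · refine tsum_congr fun v => ?_
    split
    · rw [ENNReal.toReal_prod]
      exact Finset.prod_congr rfl fun i _ => (ENNReal.toReal_ofReal (incP_pos hβ _).le).symm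
    · simp
  · intro v
    split
    · exact (ENNReal.prod_lt_top fun i _ => ENNReal.ofReal_lt_top).ne
    · simp

noncomputable def Cern (β : ℝ) : ℝ≥0∞ := ∑' k : ℤ, ENNReal.ofReal (incP β k)

lemma summable_incP {β : ℝ} (hβ : 0 < β) : Summable (incP β) := by
  have key : ∀ k : ℤ, incP β k = (Real.exp (-(β/2))) ^ k.natAbs / cbeta β := by
    intro k
    rw [incP]
    congr 1
    rw [← Real.exp_nat_mul]
    congr 1
    rw [show ((k.natAbs : ℝ)) = |(k:ℝ)| by rw [Nat.cast_natAbs]; push_cast; ring]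
    ring
  have hr0 : (0:ℝ) ≤ Real.exp (-(β/2)) := (Real.exp_pos _).le
  have hr1 : Real.exp (-(β/2)) < 1 := Real.exp_lt_one_iff.2 (by linarith)
  have hgeo : Summable (fun k : ℤ => (Real.exp (-(β/2))) ^ k.natAbs) := by
    apply Summable.of_nat_of_neg
    · simpa using summable_geometric_of_lt_one hr0 hr1
    · simpa using summable_geometric_of_lt_one hr0 hr1
  have : incP β = fun k : ℤ => (Real.exp (-(β/2))) ^ k.natAbs / cbeta β := funext key
  rw [this]
  exact hgeo.div_const (cbeta β)

lemma Cern_ne_top {β : ℝ} (hβ : 0 < β) : Cern β ≠ ⊤ := by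
  rw [Cern, ← ENNReal.ofReal_tsum_of_nonneg (fun k => (incP_pos hβ k).le) (summable_incP hβ)]
  exact ENNReal.ofReal_ne_top

lemma tsum_prod_incP (β : ℝ) :
    ∀ n : ℕ, ∑' v : Fin n → ℤ, ∏ i : Fin n, ENNReal.ofReal (incP β (v i)) = (Cern β) ^ n := by
  intro n
  induction n with
  | zero =>
    rw [tsum_eq_single (fun i => i.elim0)]
    · simp
    · intro b hb; exact absurd (funext fun i => i.elim0) hb
  | succ n ih =>
    rw [← Equiv.tsum_eq (Fin.consEquiv fun _ => ℤ)]
    have : ∀ p : ℤ × (Fin n → ℤ),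
        (∏ i : Fin (n+1), ENNReal.ofReal (incP β ((Fin.consEquiv fun _ => ℤ) p i)))
        = ENNReal.ofReal (incP β p.1) * ∏ i : Fin n, ENNReal.ofReal (incP β (p.2 i)) := by
      rintro ⟨x, w⟩
      rw [Fin.prod_univ_succ]
      simp [Fin.consEquiv]
    simp_rw [this]
    rw [ENNReal.tsum_prod']
    simp_rw [ENNReal.tsum_mul_left, ih, ENNReal.tsum_mul_right]
    rw [Cern, pow_succ]
    ring

lemma G_le_pow (β : ℝ) (n : ℕ) (E : (Fin n → ℤ) → Prop) : G β n E ≤ Cern β ^ n := by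
  rw [← tsum_prod_incP β n]
  refine ENNReal.tsum_le_tsum fun v => ?_
  split
  · exact le_refl _
  · exact zero_le

lemma G_ne_top {β : ℝ} (hβ : 0 < β) (n : ℕ) (E : (Fin n → ℤ) → Prop) : G β n E ≠ ⊤ :=
  ((G_le_pow β n E).trans_lt (ENNReal.pow_lt_top (Cern_ne_top hβ).lt_top)).ne

lemma Vpos_self (n : ℕ) (v : Fin n → ℤ) : Vpos n v n = ∑ i : Fin n, v i :=
  Finset.sum_congr rfl fun i _ => if_pos i.isLt

lemma Vpos_append_of_le {n m : ℕ} (v : Fin n → ℤ) (w : Fin m → ℤ) {j : ℕ} (hj : j ≤ n) :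
    Vpos (n+m) (Fin.append v w) j = Vpos n v j := by
  rw [Vpos, Vpos, Fin.sum_univ_add]
  simp only [Fin.coe_castAdd, Fin.coe_natAdd, Fin.append_left, Fin.append_right]
  have h2 : (∑ x : Fin m, if n + (x:ℕ) < j then w x else 0) = 0 :=
    Finset.sum_eq_zero fun i _ => if_neg (by omega)
  rw [h2, add_zero]

lemma Vpos_append_add {n m : ℕ} (v : Fin n → ℤ) (w : Fin m → ℤ) (j : ℕ) :
    Vpos (n+m) (Fin.append v w) (n+j) = Vpos n v n + Vpos m w j := by
  rw [Vpos, Fin.sum_univ_add, Vpos_self]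
  simp only [Fin.coe_castAdd, Fin.coe_natAdd, Fin.append_left, Fin.append_right]
  congr 1
  · exact Finset.sum_congr rfl fun i _ => if_pos (by omega)
  · rw [Vpos]
    exact Finset.sum_congr rfl fun i _ => by
      by_cases h : (i : ℕ) < j
      · rw [if_pos (by omega), if_pos h]
      · rw [if_neg (by omega), if_neg h]

lemma areaA_append {n m : ℕ} {v : Fin n → ℤ} (w : Fin m → ℤ) (hv : Vpos n v n = 0) :
    areaA (n+m) (Fin.append v w) = areaA n v + areaA m w := by
  rw [areaA, areaA, areaA]
  rw [show (1:ℕ) = 0 + 1 from rfl, Finset.Icc_add_one_left_eq_Ioc, Finset.Icc_add_one_left_eq_Ioc, Finset.Icc_add_one_left_eq_Ioc,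
    ← Finset.sum_Ioc_consecutive _ (Nat.zero_le n) (Nat.le_add_right n m)]
  congr 1
  · refine Finset.sum_congr rfl fun j hj => ?_
    rw [Vpos_append_of_le v w (Finset.mem_Ioc.1 hj).2]
  · rw [show Finset.Ioc n (n+m) = Finset.map (addLeftEmbedding n) (Finset.Ioc 0 m) by
      rw [Finset.map_add_left_Ioc]; simp, Finset.sum_map]
    refine Finset.sum_congr rfl fun j hj => ?_
    simp only [addLeftEmbedding_apply]
    rw [Vpos_append_add v w j, hv, zero_add]

lemma Vpos_append_last {n m : ℕ} {v : Fin n → ℤ} {w : Fin m → ℤ}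
    (hv : Vpos n v n = 0) (hw : Vpos m w m = 0) :
    Vpos (n+m) (Fin.append v w) (n+m) = 0 := by
  rw [Vpos_append_add v w m, hv, hw, add_zero]

lemma append_injective (n m : ℕ) :
    Function.Injective (fun p : (Fin n → ℤ) × (Fin m → ℤ) => Fin.append p.1 p.2) := by
  rintro ⟨v, w⟩ ⟨v', w'⟩ hvw
  simp only at hvw
  have h1 : v = v' := funext fun i => by
    have := congrFun hvw (Fin.castAdd m i); simpa [Fin.append_left] using this
  have h2 : w = w' := funext fun i => by
    have := congrFun hvw (Fin.natAdd n i); simpa [Fin.append_right] using this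
  simp [h1, h2]

lemma G_mul_le (β : ℝ) {n m : ℕ} {E₁ : (Fin n → ℤ) → Prop} {E₂ : (Fin m → ℤ) → Prop}
    {E : (Fin (n+m) → ℤ) → Prop}
    (h : ∀ v w, E₁ v → E₂ w → E (Fin.append v w)) :
    G β n E₁ * G β m E₂ ≤ G β (n+m) E := by
  have step1 : G β n E₁ * G β m E₂ =
      ∑' p : (Fin n → ℤ) × (Fin m → ℤ),
        (if E₁ p.1 then ∏ i : Fin n, ENNReal.ofReal (incP β (p.1 i)) else 0) *
        (if E₂ p.2 then ∏ i : Fin m, ENNReal.ofReal (incP β (p.2 i)) else 0) := by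
    rw [ENNReal.tsum_prod']
    simp_rw [ENNReal.tsum_mul_left, ENNReal.tsum_mul_right]
    rfl
  rw [step1]
  refine le_trans (ENNReal.tsum_le_tsum fun p => ?_)
    (ENNReal.tsum_comp_le_tsum_of_injective (append_injective n m)
      (fun u => if E u then ∏ i : Fin (n+m), ENNReal.ofReal (incP β (u i)) else 0))
  obtain ⟨v, w⟩ := p
  by_cases h1 : E₁ v
  · by_cases h2 : E₂ w
    · simp only [if_pos h1, if_pos h2, if_pos (h v w h1 h2)]
      rw [Fin.prod_univ_add]
      exact le_of_eq (by
        congr 1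
        · exact Finset.prod_congr rfl fun i _ => by rw [Fin.append_left]
        · exact Finset.prod_congr rfl fun i _ => by rw [Fin.append_right])
    · simp [if_neg h2]
  · simp [if_neg h1]

/-- The event defining `PVq`. -/
def EV (n : ℕ) (q : ℚ) : (Fin n → ℤ) → Prop :=
  fun v => Vpos n v n = 0 ∧ (areaA n v : ℚ) = q

lemma PVq_def (β : ℝ) (n : ℕ) (q : ℚ) : PVq β n q = wProb β n (EV n q) := rfl

lemma PVq_nonneg {β : ℝ} (hβ : 0 < β) (n : ℕ) (q : ℚ) : 0 ≤ PVq β n q := by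
  rw [PVq_def, wProb_eq hβ]; exact ENNReal.toReal_nonneg

lemma PVq_mul_le {β : ℝ} (hβ : 0 < β) (n m : ℕ) (q₁ q₂ : ℚ) :
    PVq β n q₁ * PVq β m q₂ ≤ PVq β (n+m) (q₁+q₂) := by
  rw [PVq_def, PVq_def, PVq_def, wProb_eq hβ, wProb_eq hβ, wProb_eq hβ, ← ENNReal.toReal_mul]
  rw [ENNReal.toReal_le_toReal
    (ENNReal.mul_ne_top (G_ne_top hβ _ _) (G_ne_top hβ _ _)) (G_ne_top hβ _ _)]
  refine G_mul_le β fun v w hv hw => ?_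
  refine ⟨Vpos_append_last hv.1 hw.1, ?_⟩
  rw [areaA_append w hv.1]
  push_cast
  rw [hv.2, hw.2]

lemma PVq_zero (β : ℝ) : PVq β 0 0 = 1 := by
  rw [PVq, wProb, tsum_eq_single (fun i : Fin 0 => i.elim0)]
  · rw [if_pos]
    · simp
    · constructor
      · simp [Vpos]
      · simp [areaA]
  · intro b hb; exact absurd (funext fun i => i.elim0) hb

lemma PVq_pow_le {β : ℝ} (hβ : 0 < β) (n : ℕ) (q : ℚ) :
    ∀ a : ℕ, PVq β n q ^ a ≤ PVq β (a * n) ((a : ℚ) * q) := by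
  intro a
  induction a with
  | zero => simp [PVq_zero]
  | succ a ih =>
    have h1 : PVq β n q ^ (a+1) = PVq β n q ^ a * PVq β n q := pow_succ _ _
    have h2 : PVq β n q ^ a * PVq β n q ≤ PVq β (a*n) ((a:ℚ)*q) * PVq β n q :=
      mul_le_mul_of_nonneg_right ih (PVq_nonneg hβ _ _)
    have h3 : PVq β (a*n) ((a:ℚ)*q) * PVq β n q ≤ PVq β (a*n + n) ((a:ℚ)*q + q) :=
      PVq_mul_le hβ _ _ _ _
    have h4 : (a*n + n) = (a+1)*n := by ring
    have h5 : ((a:ℚ)*q + q) = ((a+1 : ℕ):ℚ)*q := by push_cast; ring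
    rw [h1, ← h4, ← h5]
    exact h2.trans h3


lemma wProb_pos {β : ℝ} (hβ : 0 < β) {n : ℕ} {E : (Fin n → ℤ) → Prop}
    (v₀ : Fin n → ℤ) (hE : E v₀) : 0 < wProb β n E := by
  rw [wProb_eq hβ]
  refine ENNReal.toReal_pos ?_ (G_ne_top hβ n E)
  intro h0
  have hle : (if E v₀ then ∏ i : Fin n, ENNReal.ofReal (incP β (v₀ i)) else 0) ≤ G β n E :=
    ENNReal.le_tsum v₀
  rw [if_pos hE, h0, le_zero_iff] at hle
  have : ∀ i ∈ Finset.univ (α := Fin n), ENNReal.ofReal (incP β (v₀ i)) ≠ 0 :=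
    fun i _ => (ENNReal.ofReal_pos.2 (incP_pos hβ _)).ne'
  exact (Finset.prod_ne_zero_iff.2 this) hle

lemma PVq_one_pos {β : ℝ} (hβ : 0 < β) : 0 < PVq β 1 0 := by
  refine wProb_pos hβ (fun _ => (0:ℤ)) ⟨by simp [Vpos], ?_⟩
  have h : Finset.Icc 1 1 = ({1} : Finset ℕ) := by decide
  simp [areaA, h, Vpos]

lemma PVq_two_pos {β : ℝ} (hβ : 0 < β) (m : ℕ) : 0 < PVq β 2 (m:ℚ) := by
  refine wProb_pos hβ ![(m:ℤ), -(m:ℤ)] ⟨by simp [Vpos, Fin.sum_univ_two], ?_⟩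
  have h : Finset.Icc 1 2 = ({1, 2} : Finset ℕ) := by decide
  simp [areaA, h, Vpos, Fin.sum_univ_two]

lemma PVq_pos {β : ℝ} (hβ : 0 < β) {n : ℕ} (hn : 2 ≤ n) (m : ℕ) : 0 < PVq β n (m:ℚ) := by
  have h1 : 0 < PVq β ((n-2) * 1) (((n-2 : ℕ):ℚ) * 0) :=
    lt_of_lt_of_le (pow_pos (PVq_one_pos hβ) (n-2)) (PVq_pow_le hβ 1 0 (n-2))
  have h2 : 0 < PVq β 2 (m:ℚ) * PVq β ((n-2)*1) (((n-2:ℕ):ℚ)*0) :=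
    mul_pos (PVq_two_pos hβ m) h1
  have h3 := PVq_mul_le hβ 2 ((n-2)*1) (m:ℚ) (((n-2:ℕ):ℚ)*0)
  have h4 : 2 + (n-2)*1 = n := by omega
  have h5 : (m:ℚ) + ((n-2:ℕ):ℚ)*0 = (m:ℚ) := by ring
  rw [h4, h5] at h3
  exact h2.trans_le h3

lemma PVq_le {β : ℝ} (hβ : 0 < β) (n : ℕ) (q : ℚ) :
    PVq β n q ≤ (Cern β).toReal ^ n := by
  rw [PVq_def, wProb_eq hβ, ← ENNReal.toReal_pow]
  rw [ENNReal.toReal_le_toReal (G_ne_top hβ _ _) (ENNReal.pow_ne_top (Cern_ne_top hβ))]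
  exact G_le_pow β n _


/-- The set whose supremum defines `gQ`. -/
def Sset (β : ℝ) (α : ℚ) : Set ℝ :=
  {x : ℝ | ∃ n : ℕ, Nmem α n ∧ x = Real.log (PVq β n (α * n)) / n}

lemma gQ_eq (β : ℝ) (α : ℚ) : gQ β α = sSup (Sset β α) := rfl

lemma Sset_nonempty (β : ℝ) (α : ℚ) (hα : 0 ≤ α) : (Sset β α).Nonempty := by
  refine ⟨Real.log (PVq β (2*α.den) (α * ((2*α.den : ℕ):ℚ))) / ((2*α.den : ℕ):ℝ),
    ⟨2*α.den, ⟨?_, ⟨2 * α.num.toNat, ?_⟩⟩, rfl⟩⟩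
  · have := α.den_pos; omega
  · have hnum : ((α.num.toNat : ℕ) : ℚ) = (α.num : ℚ) := by
      exact_mod_cast congrArg (Int.cast : ℤ → ℚ) (Int.toNat_of_nonneg (Rat.num_nonneg.2 hα))
    push_cast
    rw [hnum]
    linear_combination 2 * Rat.mul_den_eq_num α

lemma Sset_bddAbove {β : ℝ} (hβ : 0 < β) (α : ℚ) : BddAbove (Sset β α) := by
  refine ⟨Real.log (max ((Cern β).toReal) 1), ?_⟩
  rintro x ⟨n, ⟨hn2, m, hm⟩, rfl⟩
  set Ct := max ((Cern β).toReal) 1 with hCt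
  have hCt1 : (1:ℝ) ≤ Ct := le_max_right _ _
  have hP_pos : 0 < PVq β n (α * n) := by rw [hm]; exact PVq_pos hβ hn2 m
  have hP_le : PVq β n (α*n) ≤ Ct ^ n :=
    (PVq_le hβ n _).trans (pow_le_pow_left₀ ENNReal.toReal_nonneg (le_max_left _ _) n)
  have hlog : Real.log (PVq β n (α*n)) ≤ n * Real.log Ct := by
    calc Real.log (PVq β n (α*n)) ≤ Real.log (Ct^n) := Real.log_le_log hP_pos hP_le
    _ = n * Real.log Ct := by rw [Real.log_pow]
  have hn0 : (0:ℝ) < n := by exact_mod_cast (by omega : 0 < n)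
  rw [div_le_iff₀ hn0]
  calc Real.log (PVq β n (α * n)) ≤ n * Real.log Ct := hlog
    _ = Real.log Ct * n := mul_comm _ _

lemma PVq_combo {β : ℝ} (hβ : 0 < β) (n₁ n₂ a b : ℕ) (q₁ q₂ : ℚ) :
    PVq β n₁ q₁ ^ a * PVq β n₂ q₂ ^ b ≤
      PVq β (a*n₁ + b*n₂) ((a:ℚ)*q₁ + (b:ℚ)*q₂) := by
  calc PVq β n₁ q₁ ^ a * PVq β n₂ q₂ ^ b
      ≤ PVq β (a*n₁) ((a:ℚ)*q₁) * PVq β (b*n₂) ((b:ℚ)*q₂) :=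
        mul_le_mul (PVq_pow_le hβ _ _ a) (PVq_pow_le hβ _ _ b)
          (pow_nonneg (PVq_nonneg hβ _ _) _) (PVq_nonneg hβ _ _)
    _ ≤ _ := PVq_mul_le hβ _ _ _ _

lemma combo_le {S₁ S₂ : Set ℝ} (h₁ : S₁.Nonempty) (h₂ : S₂.Nonempty)
    (b₁ : BddAbove S₁) (b₂ : BddAbove S₂) {l g : ℝ} (hl0 : 0 ≤ l) (hl1 : l ≤ 1)
    (h : ∀ x₁ ∈ S₁, ∀ x₂ ∈ S₂, l*x₁ + (1-l)*x₂ ≤ g) :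
    l * sSup S₁ + (1-l) * sSup S₂ ≤ g := by
  rcases eq_or_lt_of_le hl0 with h0 | h0
  · obtain ⟨x₁, hx₁⟩ := h₁
    have hS2 : sSup S₂ ≤ g := csSup_le h₂ fun x₂ hx₂ => by
      have := h x₁ hx₁ x₂ hx₂; rw [← h0] at this; linarith
    rw [← h0]; linarith
  rcases eq_or_lt_of_le hl1 with h1 | h1
  · obtain ⟨x₂, hx₂⟩ := h₂
    have hS1 : sSup S₁ ≤ g := csSup_le h₁ fun x₁ hx₁ => by
      have := h x₁ hx₁ x₂ hx₂; rw [h1] at this; linarith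
    rw [h1]; linarith
  · have hl1' : (0:ℝ) < 1 - l := by linarith
    have hs₁ : sSup S₁ ≤ (g - (1-l) * sSup S₂)/l := by
      refine csSup_le h₁ fun x₁ hx₁ => ?_
      rw [le_div_iff₀ h0]
      have hs₂ : sSup S₂ ≤ (g - l * x₁)/(1-l) := by
        refine csSup_le h₂ fun x₂ hx₂ => ?_
        rw [le_div_iff₀ hl1']
        have := h x₁ hx₁ x₂ hx₂; linarith
      have := (le_div_iff₀ hl1').1 hs₂
      linarith
    have := (le_div_iff₀ h0).1 hs₁
    linarith

end S8


/-- Concavity of `g_β` on the nonnegative rationals. -/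
theorem stmt8 (β : ℝ) (hβ : 0 < β) (α₁ α₂ : ℚ) (h1 : 0 ≤ α₁) (h2 : 0 ≤ α₂)
    (p q : ℕ) (hq : 0 < q) (hpq : p ≤ q) :
    gQ β (((p : ℚ) / q) * α₁ + (1 - (p : ℚ) / q) * α₂) ≥
      ((p : ℝ) / q) * gQ β α₁ + (1 - (p : ℝ) / q) * gQ β α₂ := by
  classical
  obtain ⟨d, hd⟩ : ∃ d, q = p + d := ⟨q - p, by omega⟩
  set α : ℚ := ((p : ℚ) / q) * α₁ + (1 - (p : ℚ) / q) * α₂ with hα_def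
  have hqQ : (0:ℚ) < (q:ℚ) := by exact_mod_cast hq
  have hqR : (0:ℝ) < (q:ℝ) := by exact_mod_cast hq
  have hlam0 : (0:ℝ) ≤ (p:ℝ)/q := by positivity
  have hlam1 : (p:ℝ)/q ≤ 1 := by
    rw [div_le_one hqR]; exact_mod_cast hpq
  have hα : 0 ≤ α := by
    have hp1 : (0:ℚ) ≤ (p:ℚ)/q := by positivity
    have hp2 : (p:ℚ)/q ≤ 1 := by rw [div_le_one hqQ]; exact_mod_cast hpq
    have := mul_nonneg hp1 h1
    have := mul_nonneg (by linarith : (0:ℚ) ≤ 1 - (p:ℚ)/q) h2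
    rw [hα_def]; linarith
  -- the key superadditivity bound
  have hmain : ∀ x₁ ∈ S8.Sset β α₁, ∀ x₂ ∈ S8.Sset β α₂,
      ((p:ℝ)/q)*x₁ + (1-(p:ℝ)/q)*x₂ ≤ gQ β α := by
    rintro x₁ ⟨n₁, ⟨hn₁2, m₁, hm₁⟩, rfl⟩ x₂ ⟨n₂, ⟨hn₂2, m₂, hm₂⟩, rfl⟩
    set a := p * n₂ with ha
    set b := d * n₁ with hb
    set N := a * n₁ + b * n₂ with hN
    have hNeq : N = (p + d) * (n₁ * n₂) := by rw [hN, ha, hb]; ring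
    have hN2 : 2 ≤ N := by
      rw [hNeq]
      have h4 : 2 * 2 ≤ n₁ * n₂ := Nat.mul_le_mul hn₁2 hn₂2
      have h1q : 1 ≤ p + d := by omega
      calc 2 ≤ n₁ * n₂ := by omega
        _ = 1 * (n₁ * n₂) := (one_mul _).symm
        _ ≤ (p + d) * (n₁ * n₂) := Nat.mul_le_mul_right _ h1q
    have hqd : (q:ℚ) = (p:ℚ) + (d:ℚ) := by exact_mod_cast congrArg (Nat.cast : ℕ → ℚ) hd
    have hqd0 : (p:ℚ) + (d:ℚ) ≠ 0 := by rw [← hqd]; exact ne_of_gt hqQ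
    have hαN : α * (N:ℚ) = (a:ℚ)*(α₁*(n₁:ℚ)) + (b:ℚ)*(α₂*(n₂:ℚ)) := by
      rw [hα_def, hN, ha, hb]
      push_cast [hd]
      field_simp
      ring
    have hsuper : PVq β n₁ (α₁*(n₁:ℚ)) ^ a * PVq β n₂ (α₂*(n₂:ℚ)) ^ b ≤ PVq β N (α * N) := by
      rw [hαN]; exact S8.PVq_combo hβ n₁ n₂ a b _ _
    have hP₁ : 0 < PVq β n₁ (α₁*(n₁:ℚ)) := by rw [hm₁]; exact S8.PVq_pos hβ hn₁2 m₁
    have hP₂ : 0 < PVq β n₂ (α₂*(n₂:ℚ)) := by rw [hm₂]; exact S8.PVq_pos hβ hn₂2 m₂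
    have hPN : 0 < PVq β N (α * N) :=
      lt_of_lt_of_le (mul_pos (pow_pos hP₁ a) (pow_pos hP₂ b)) hsuper
    have hlog : (a:ℝ) * Real.log (PVq β n₁ (α₁*(n₁:ℚ))) + (b:ℝ) * Real.log (PVq β n₂ (α₂*(n₂:ℚ)))
        ≤ Real.log (PVq β N (α * N)) := by
      calc (a:ℝ) * Real.log (PVq β n₁ (α₁*(n₁:ℚ))) + (b:ℝ) * Real.log (PVq β n₂ (α₂*(n₂:ℚ)))
          = Real.log (PVq β n₁ (α₁*(n₁:ℚ)) ^ a * PVq β n₂ (α₂*(n₂:ℚ)) ^ b) := by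
            rw [Real.log_mul (pow_ne_zero _ hP₁.ne') (pow_ne_zero _ hP₂.ne'),
              Real.log_pow, Real.log_pow]
        _ ≤ Real.log (PVq β N (α * N)) :=
            Real.log_le_log (mul_pos (pow_pos hP₁ a) (pow_pos hP₂ b)) hsuper
    have hmem : Real.log (PVq β N (α * N)) / (N:ℝ) ∈ S8.Sset β α := by
      refine ⟨N, ⟨hN2, ⟨a * m₁ + b * m₂, ?_⟩⟩, rfl⟩
      rw [hαN, hm₁, hm₂]; push_cast; ring
    have hgQ : Real.log (PVq β N (α * N)) / (N:ℝ) ≤ gQ β α :=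
      le_csSup (S8.Sset_bddAbove hβ α) hmem
    have hN0 : (0:ℝ) < (N:ℝ) := by exact_mod_cast (by omega : 0 < N)
    have hn₁0 : (0:ℝ) < (n₁:ℝ) := by exact_mod_cast (by omega : 0 < n₁)
    have hn₂0 : (0:ℝ) < (n₂:ℝ) := by exact_mod_cast (by omega : 0 < n₂)
    have hqdR : (q:ℝ) = (p:ℝ) + (d:ℝ) := by exact_mod_cast congrArg (Nat.cast : ℕ → ℝ) hd
    have harith : ((p:ℝ)/q) * (Real.log (PVq β n₁ (α₁*(n₁:ℚ))) / n₁)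
        + (1-(p:ℝ)/q) * (Real.log (PVq β n₂ (α₂*(n₂:ℚ))) / n₂)
        = ((a:ℝ) * Real.log (PVq β n₁ (α₁*(n₁:ℚ))) + (b:ℝ) * Real.log (PVq β n₂ (α₂*(n₂:ℚ)))) / (N:ℝ) := by
      have hNR : (N:ℝ) = ((p:ℝ) + d) * ((n₁:ℝ) * n₂) := by
        rw [hNeq]; push_cast; ring
      have haR : (a:ℝ) = (p:ℝ) * n₂ := by rw [ha]; push_cast; ring
      have hbR : (b:ℝ) = (d:ℝ) * n₁ := by rw [hb]; push_cast; ring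
      rw [hNR, haR, hbR, hqdR]
      have hpd0 : (p:ℝ) + (d:ℝ) ≠ 0 := by rw [← hqdR]; exact ne_of_gt hqR
      field_simp
      ring
    rw [harith]
    calc ((a:ℝ) * Real.log (PVq β n₁ (α₁*(n₁:ℚ))) + (b:ℝ) * Real.log (PVq β n₂ (α₂*(n₂:ℚ)))) / (N:ℝ)
        ≤ Real.log (PVq β N (α * N)) / (N:ℝ) := by
          gcongr
      _ ≤ gQ β α := hgQ
  have := S8.combo_le (S8.Sset_nonempty β α₁ h1) (S8.Sset_nonempty β α₂ h2)
    (S8.Sset_bddAbove hβ α₁) (S8.Sset_bddAbove hβ α₂) hlam0 hlam1 hmain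
  rw [ge_iff_le, S8.gQ_eq β α₁, S8.gQ_eq β α₂]
  exact this
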